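/- Let S₁, S₂ be 2-spherical objects in an enhanced triangulated category with Ext*(S₁,S₂) one-dimensional and concentrated in degree 1 (an A₂-configuration). Then t₁t₂(S₁) ≅ S₂, where t_i denotes the spherical twist along S_i. -/

import Mathlib

open CategoryTheory CategoryTheory.Limits CategoryTheory.Pretriangulated TensorProduct

variable {k : Type*} [Field k]
variable {C : Type*} [Category C] [Preadditive C] [HasZeroObject C] [Linear k C]
  [HasShift C ℤ] [∀ n : ℤ, (CategoryTheory.shiftFunctor C n).Additive] [Pretriangulated C]

/-- The composition pairing `Hom(S, X[d]) ⊗ Hom(X, S[2-d]) → Hom(S, S[2])`. -/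
def compPair (S X : C) (d : ℤ) (f : S ⟶ X⟦d⟧) (g : X ⟶ S⟦(2 : ℤ) - d⟧) :
    S ⟶ S⟦(2 : ℤ)⟧ :=
  f ≫ (shiftFunctor C d).map g ≫ (shiftFunctorAdd' C ((2 : ℤ) - d) d 2 (by omega)).inv.app S

/-- An object `S` of a `k`-linear triangulated category is 2-spherical: its graded
endomorphisms are one-dimensional in degrees `0` and `2` and vanish otherwise, all graded
Hom-spaces out of and into `S` are finite dimensional, and the composition pairing
`Hom(S, X[d]) ⊗ Hom(X, S[2-d]) → Hom(S, S[2]) ≅ k` is perfect (the 2-Calabi–Yau property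
`RHom(S, X) ≅ RHom(X, S[2])^∨`). -/
def IsTwoSpherical (S : C) : Prop :=
  Module.finrank k (S ⟶ S⟦(0 : ℤ)⟧) = 1 ∧
  Module.finrank k (S ⟶ S⟦(2 : ℤ)⟧) = 1 ∧
  (∀ d : ℤ, d ≠ 0 → d ≠ 2 → ∀ f : S ⟶ S⟦d⟧, f = 0) ∧
  (∀ (X : C) (d : ℤ), FiniteDimensional k (S ⟶ X⟦d⟧)) ∧
  (∀ (X : C) (d : ℤ) (f : S ⟶ X⟦d⟧), f ≠ 0 →
    ∃ g : X ⟶ S⟦(2 : ℤ) - d⟧, compPair S X d f g ≠ 0) ∧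
  (∀ (X : C) (d : ℤ) (g : X ⟶ S⟦(2 : ℤ) - d⟧), g ≠ 0 →
    ∃ f : S ⟶ X⟦d⟧, compPair S X d f g ≠ 0)

/-- The data of the spherical twist along `S`: a functor `t` together with a functor
`E` (playing the role of `Y ↦ RHom(S,Y) ⊗ S`), a counit `f : E ⟶ Id`, a natural
transformation `g : Id ⟶ t`, and connecting maps making
`E Y ⟶ Y ⟶ t Y ⟶ E Y [1]` a distinguished triangle for every `Y`; the structure of `E` as
`RHom(S,Y) ⊗ S` is recorded by natural identifications
`Hom(T, (E Y)[d]) ≅ ⊕ₑ Hom(S, Y[e]) ⊗ Hom(T, S[d-e])` for every test object `T`. -/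
structure TwistDatum (k : Type*) [Field k] {C : Type*} [Category C] [Preadditive C]
    [HasZeroObject C] [Linear k C] [HasShift C ℤ]
    [∀ n : ℤ, (CategoryTheory.shiftFunctor C n).Additive] [Pretriangulated C] (S : C) where
  t : C ⥤ C
  E : C ⥤ C
  f : E ⟶ 𝟭 C
  g : 𝟭 C ⟶ t
  h : ∀ Y : C, t.obj Y ⟶ (E.obj Y)⟦(1 : ℤ)⟧
  tri : ∀ Y : C, Triangle.mk (f.app Y) (g.app Y) (h Y) ∈ distTriang C
  hE : ∀ (T Y : C) (d : ℤ),
    Nonempty ((T ⟶ (E.obj Y)⟦d⟧) ≃ₗ[k]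
      DirectSum ℤ (fun e : ℤ => (S ⟶ Y⟦e⟧) ⊗[k] (T ⟶ S⟦d - e⟧)))

/-- For an `A₂`-configuration `S₁, S₂` of 2-spherical objects
(`Ext*(S₁,S₂)` one-dimensional, concentrated in degree 1), one has `t₁ t₂ (S₁) ≅ S₂`.
Here `t₂(S₁)` is the cone `X` of the evaluation `RHom(S₂,S₁) ⊗ S₂ ≅ S₂[-1] → S₁` (given by
a nonzero `ψ`), and `t₁(X)` is the cone `Z` of the evaluation `RHom(S₁,X) ⊗ S₁ → X`, which
is given by a nonzero map `u : S₁ → X` since `RHom(S₁,X)` is one-dimensional in degree 0. -/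
theorem twist_twist_of_A2_configuration
    (S₁ S₂ : C) (h1 : IsTwoSpherical (k := k) S₁) (h2 : IsTwoSpherical (k := k) S₂)
    (hadj : Module.finrank k (S₁ ⟶ S₂⟦(1 : ℤ)⟧) = 1 ∧
      Module.finrank k (S₂ ⟶ S₁⟦(1 : ℤ)⟧) = 1 ∧
      (∀ d : ℤ, d ≠ 1 → ∀ f : S₁ ⟶ S₂⟦d⟧, f = 0) ∧
      (∀ d : ℤ, d ≠ 1 → ∀ f : S₂ ⟶ S₁⟦d⟧, f = 0))
    (ψ : S₂⟦(-1 : ℤ)⟧ ⟶ S₁) (hψ : ψ ≠ 0)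
    (X : C) (g₁ : S₁ ⟶ X) (h₁ : X ⟶ (S₂⟦(-1 : ℤ)⟧)⟦(1 : ℤ)⟧)
    (htri₁ : Triangle.mk ψ g₁ h₁ ∈ distTriang C)
    (u : S₁ ⟶ X) (hu : u ≠ 0)
    (Z : C) (v : X ⟶ Z) (w : Z ⟶ S₁⟦(1 : ℤ)⟧)
    (htri₂ : Triangle.mk u v w ∈ distTriang C) :
    Nonempty (Z ≅ S₂) := by
  obtain ⟨hend, -, -, -, -, -⟩ := h1
  obtain ⟨-, -, hd12, -⟩ := hadj
  -- the canonical isomorphism `(S₂⟦-1⟧)⟦1⟧ ≅ S₂`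
  let α : ((S₂⟦(-1 : ℤ)⟧)⟦(1 : ℤ)⟧ : C) ≅ S₂ :=
    (shiftFunctorCompIsoId C (-1) 1 (by norm_num)).app S₂
  -- `u ≫ h₁ = 0` since `Hom(S₁, S₂⟦0⟧) = 0`
  have huh : u ≫ h₁ = 0 := by
    have : (u ≫ h₁) ≫ α.hom ≫ ((shiftFunctorZero C ℤ).app S₂).inv = 0 :=
      hd12 0 (by norm_num) _
    have := congrArg (fun q => q ≫ ((shiftFunctorZero C ℤ).app S₂).hom ≫ α.inv) this
    simpa using this
  have hrot := rot_of_distTriang _ htri₁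
  -- factor `u` through `g₁` using the rotated triangle
  obtain ⟨e, he⟩ : ∃ e : S₁ ⟶ S₁, u = e ≫ g₁ := Triangle.coyoneda_exact₂ _ hrot u huh
  -- `End(S₁)` is one-dimensional, so `e = c • 𝟙` for some scalar `c`
  have hone : (𝟙 S₁ : S₁ ⟶ S₁) ≠ 0 := fun h => hu (by rw [← Category.id_comp u, h, zero_comp])
  have hend' : Module.finrank k (S₁ ⟶ S₁) = 1 := by
    rw [← hend]
    exact (Linear.homCongr k (Iso.refl S₁) ((shiftFunctorZero C ℤ).app S₁).symm).finrank_eq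
  have hspan : Submodule.span k {(𝟙 S₁ : S₁ ⟶ S₁)} = ⊤ :=
    (finrank_eq_one_iff_of_nonzero _ hone).mp hend'
  have hmem : e ∈ Submodule.span k {(𝟙 S₁ : S₁ ⟶ S₁)} := hspan ▸ Submodule.mem_top
  obtain ⟨c, hc⟩ := Submodule.mem_span_singleton.mp hmem
  have hue : u = c • g₁ := by
    rw [he, ← hc, Linear.smul_comp, Category.id_comp]
  have hc0 : c ≠ 0 := fun h => hu (by rw [hue, h, zero_smul])
  -- compare the two distinguished triangles via `(c • 𝟙, 𝟙)`
  let e₁ : S₁ ≅ S₁ :=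
    { hom := c • 𝟙 S₁
      inv := c⁻¹ • 𝟙 S₁
      hom_inv_id := by
        rw [Linear.smul_comp, Linear.comp_smul, Category.id_comp, smul_smul,
          mul_inv_cancel₀ hc0, one_smul]
      inv_hom_id := by
        rw [Linear.smul_comp, Linear.comp_smul, Category.id_comp, smul_smul,
          inv_mul_cancel₀ hc0, one_smul] }
  have comm : (Triangle.mk u v w).mor₁ ≫ (Iso.refl X).hom =
      e₁.hom ≫ ((Triangle.mk ψ g₁ h₁).rotate).mor₁ := by
    dsimp [e₁]
    show u ≫ 𝟙 X = (c • 𝟙 S₁) ≫ g₁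
    rw [Category.comp_id, Linear.smul_comp, Category.id_comp, hue]
  have iso := isoTriangleOfIso₁₂ _ _ htri₂ hrot e₁ (Iso.refl X) comm
  exact ⟨Triangle.π₃.mapIso iso ≪≫ α⟩
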